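/- Suppose the linear map 𝒜 satisfies the rank-2r RIP with constant δ_{2r}. Then for all matrices M₁, M₂ ∈ ℝ^{n₁×n₂} of rank at most r, |⟨𝒜(M₁), 𝒜(M₂)⟩ − ⟨M₁, M₂⟩| ≤ δ_{2r}‖M₁‖_F‖M₂‖_F; equivalently, |Tr([(𝒜*𝒜 − ℐ)(M₁)]·M₂ᵀ)| ≤ δ_{2r}‖M₁‖_F‖M₂‖_F, where ℐ is the identity map. -/

import Mathlib

open Matrix BigOperators

/-- Frobenius norm of a real matrix. -/
noncomputable def frobNorm {m n : ℕ} (A : Matrix (Fin m) (Fin n) ℝ) : ℝ :=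
  Real.sqrt (∑ i, ∑ j, (A i j) ^ 2)

/-- Spectral norm (largest singular value) of a real matrix. -/
noncomputable def specNorm {m n : ℕ} (A : Matrix (Fin m) (Fin n) ℝ) : ℝ :=
  ‖LinearMap.toContinuousLinearMap (Matrix.toEuclideanLin A)‖

/-- Smallest singular value of a matrix with `r` columns (the `r`-th largest singular value). -/
noncomputable def sigmaMinCol {m r : ℕ} (A : Matrix (Fin m) (Fin r) ℝ) : ℝ :=
  sInf { s | ∃ v : EuclideanSpace ℝ (Fin r), ‖v‖ = 1 ∧ s = ‖Matrix.toEuclideanLin A v‖ }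

/-- Matrix inner product `⟨A, B⟩ = Tr(Bᵀ A)`. -/
noncomputable def matInner {m n : ℕ} (A B : Matrix (Fin m) (Fin n) ℝ) : ℝ :=
  Matrix.trace (Bᵀ * A)

/-- Euclidean norm on `ℝ^m`. -/
noncomputable def vec2Norm {m : ℕ} (y : Fin m → ℝ) : ℝ :=
  Real.sqrt (∑ i, (y i) ^ 2)

/-- The sensing operator `𝒜(M) = (⟨A_i, M⟩)_{i=1..m}`. -/
noncomputable def senseOp {n₁ n₂ m : ℕ} (As : Fin m → Matrix (Fin n₁) (Fin n₂) ℝ)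
    (M : Matrix (Fin n₁) (Fin n₂) ℝ) : Fin m → ℝ :=
  fun i => matInner (As i) M

/-- The adjoint operator `𝒜*(y) = ∑ i, y i • A i`. -/
noncomputable def senseAdj {n₁ n₂ m : ℕ} (As : Fin m → Matrix (Fin n₁) (Fin n₂) ℝ)
    (y : Fin m → ℝ) : Matrix (Fin n₁) (Fin n₂) ℝ :=
  ∑ i, y i • As i

/-- Rank-`k` restricted isometry property with constant `δ`. -/
def HasRIP {n₁ n₂ m : ℕ} (As : Fin m → Matrix (Fin n₁) (Fin n₂) ℝ) (k : ℕ) (δ : ℝ) : Prop :=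
  0 ≤ δ ∧ δ < 1 ∧
  ∀ M : Matrix (Fin n₁) (Fin n₂) ℝ, M.rank ≤ k →
    (1 - δ) * (frobNorm M) ^ 2 ≤ (vec2Norm (senseOp As M)) ^ 2 ∧
    (vec2Norm (senseOp As M)) ^ 2 ≤ (1 + δ) * (frobNorm M) ^ 2

/-- dist(Z, Z⋆): infimum over invertible `P` of
`sqrt(‖XP − X⋆‖_F² + ‖YP⁻ᵀ − Y⋆‖_F²)`. -/
noncomputable def distZ {n₁ n₂ r : ℕ} (X Xs : Matrix (Fin n₁) (Fin r) ℝ)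
    (Y Ys : Matrix (Fin n₂) (Fin r) ℝ) : ℝ :=
  sInf { v | ∃ P : Matrix (Fin r) (Fin r) ℝ, IsUnit P ∧
    v = Real.sqrt ((frobNorm (X * P - Xs)) ^ 2 + (frobNorm (Y * (P⁻¹)ᵀ - Ys)) ^ 2) }

lemma frob_sq {m n : ℕ} (A : Matrix (Fin m) (Fin n) ℝ) :
    frobNorm A ^ 2 = ∑ i, ∑ j, (A i j) ^ 2 :=
  Real.sq_sqrt (by positivity)

lemma frob_nonneg {m n : ℕ} (A : Matrix (Fin m) (Fin n) ℝ) : 0 ≤ frobNorm A :=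
  Real.sqrt_nonneg _

lemma frob_eq_zero {m n : ℕ} {A : Matrix (Fin m) (Fin n) ℝ} (h : frobNorm A = 0) : A = 0 := by
  have hs : ∑ i, ∑ j, (A i j) ^ 2 = 0 := by
    have := frob_sq A
    rw [h] at this
    simpa using this.symm
  ext i j
  have h1 := (Finset.sum_eq_zero_iff_of_nonneg
    (fun i _ => Finset.sum_nonneg fun j _ => sq_nonneg _)).mp hs i (Finset.mem_univ i)
  have h2 := (Finset.sum_eq_zero_iff_of_nonneg
    (fun j _ => sq_nonneg _)).mp h1 j (Finset.mem_univ j)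
  have := pow_eq_zero_iff (n := 2) (by norm_num) |>.mp h2
  simpa using this

lemma vec2_sq {m : ℕ} (y : Fin m → ℝ) : vec2Norm y ^ 2 = ∑ i, (y i) ^ 2 :=
  Real.sq_sqrt (Finset.sum_nonneg fun _ _ => sq_nonneg _)

lemma matInner_sum {m n : ℕ} (A B : Matrix (Fin m) (Fin n) ℝ) :
    matInner A B = ∑ i, ∑ j, A i j * B i j := by
  rw [matInner, Matrix.trace, Finset.sum_comm]
  simp [Matrix.diag, Matrix.mul_apply, Matrix.transpose_apply, mul_comm]

lemma senseOp_comb {n₁ n₂ m : ℕ} (As : Fin m → Matrix (Fin n₁) (Fin n₂) ℝ)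
    (a b : ℝ) (M₁ M₂ : Matrix (Fin n₁) (Fin n₂) ℝ) (i : Fin m) :
    senseOp As (b • M₁ + a • M₂) i = b * senseOp As M₁ i + a * senseOp As M₂ i := by
  simp only [senseOp, matInner_sum, Matrix.add_apply, Matrix.smul_apply, smul_eq_mul,
    Finset.mul_sum, ← Finset.sum_add_distrib]
  exact Finset.sum_congr rfl fun _ _ => Finset.sum_congr rfl fun _ _ => by ring

lemma frob_comb {n₁ n₂ : ℕ} (a b : ℝ) (M₁ M₂ : Matrix (Fin n₁) (Fin n₂) ℝ) :
    frobNorm (b • M₁ + a • M₂) ^ 2 =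
      b ^ 2 * frobNorm M₁ ^ 2 + 2 * a * b * matInner M₁ M₂ + a ^ 2 * frobNorm M₂ ^ 2 := by
  simp only [frob_sq, matInner_sum, Matrix.add_apply, Matrix.smul_apply, smul_eq_mul,
    Finset.mul_sum, ← Finset.sum_add_distrib]
  exact Finset.sum_congr rfl fun _ _ => Finset.sum_congr rfl fun _ _ => by ring

lemma rank_smul_le {n₁ n₂ : ℕ} (c : ℝ) (M : Matrix (Fin n₁) (Fin n₂) ℝ) :
    (c • M).rank ≤ M.rank := by
  have h : c • M = (c • (1 : Matrix (Fin n₁) (Fin n₁) ℝ)) * M := by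
    rw [Matrix.smul_mul, Matrix.one_mul]
  rw [h]
  exact Matrix.rank_mul_le_right _ _

lemma matrix_rank_add_le {n₁ n₂ : ℕ} (A B : Matrix (Fin n₁) (Fin n₂) ℝ) :
    (A + B).rank ≤ A.rank + B.rank := by
  rw [Matrix.rank, Matrix.rank, Matrix.rank, Matrix.mulVecLin_add]
  refine le_trans (Submodule.finrank_mono ?_) (Submodule.finrank_add_le_finrank_add_finrank _ _)
  rintro x ⟨v, rfl⟩
  exact Submodule.add_mem_sup ⟨v, rfl⟩ ⟨v, rfl⟩

lemma rank_comb {n₁ n₂ r : ℕ} (a b : ℝ) {M₁ M₂ : Matrix (Fin n₁) (Fin n₂) ℝ}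
    (h₁ : M₁.rank ≤ r) (h₂ : M₂.rank ≤ r) : (b • M₁ + a • M₂).rank ≤ 2 * r := by
  calc (b • M₁ + a • M₂).rank ≤ (b • M₁).rank + (a • M₂).rank := matrix_rank_add_le _ _
    _ ≤ M₁.rank + M₂.rank := add_le_add (rank_smul_le _ _) (rank_smul_le _ _)
    _ ≤ 2 * r := by omega

lemma vec_comb {n₁ n₂ m : ℕ} (As : Fin m → Matrix (Fin n₁) (Fin n₂) ℝ)
    (a b : ℝ) (M₁ M₂ : Matrix (Fin n₁) (Fin n₂) ℝ) :
    vec2Norm (senseOp As (b • M₁ + a • M₂)) ^ 2 =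
      b ^ 2 * (∑ i, (senseOp As M₁ i) ^ 2) +
        2 * a * b * (∑ i, senseOp As M₁ i * senseOp As M₂ i) +
        a ^ 2 * (∑ i, (senseOp As M₂ i) ^ 2) := by
  rw [vec2_sq]
  simp only [senseOp_comb, Finset.mul_sum, ← Finset.sum_add_distrib]
  exact Finset.sum_congr rfl fun _ _ => by ring

lemma key_bound {n₁ n₂ r m : ℕ} (As : Fin m → Matrix (Fin n₁) (Fin n₂) ℝ) (δ : ℝ)
    (hRIP : HasRIP As (2 * r) δ)
    (M₁ M₂ : Matrix (Fin n₁) (Fin n₂) ℝ)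
    (h₁ : M₁.rank ≤ r) (h₂ : M₂.rank ≤ r) :
    |(∑ i, senseOp As M₁ i * senseOp As M₂ i) - matInner M₁ M₂| ≤
      δ * frobNorm M₁ * frobNorm M₂ := by
  obtain ⟨hδ0, hδ1, hA⟩ := hRIP
  by_cases hz1 : frobNorm M₁ = 0
  · have : M₁ = 0 := frob_eq_zero hz1
    subst this
    simp [senseOp, matInner_sum, hz1]
  by_cases hz2 : frobNorm M₂ = 0
  · have : M₂ = 0 := frob_eq_zero hz2
    subst this
    simp [senseOp, matInner_sum, hz2]
  have ha : 0 < frobNorm M₁ := lt_of_le_of_ne (frob_nonneg _) (Ne.symm hz1)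
  have hb : 0 < frobNorm M₂ := lt_of_le_of_ne (frob_nonneg _) (Ne.symm hz2)
  set a := frobNorm M₁ with ha'
  set b := frobNorm M₂ with hb'
  have hrp := hA (b • M₁ + a • M₂) (rank_comb a b h₁ h₂)
  have hrm := hA (b • M₁ + (-a) • M₂) (rank_comb (-a) b h₁ h₂)
  rw [vec_comb, frob_comb] at hrp hrm
  set S := ∑ i, senseOp As M₁ i * senseOp As M₂ i with hS
  set T := matInner M₁ M₂ with hT
  set P₁ := ∑ i, (senseOp As M₁ i) ^ 2 with hP₁
  set P₂ := ∑ i, (senseOp As M₂ i) ^ 2 with hP₂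
  have hab : 0 < a * b := mul_pos ha hb
  rw [abs_sub_le_iff]
  constructor
  · have h4 : 4 * (a * b) * (S - T) ≤ 4 * (a * b) * (δ * a * b) := by
      nlinarith [hrp.2, hrm.1, sq_nonneg a, sq_nonneg b]
    have := (mul_le_mul_iff_right₀ (by linarith : (0:ℝ) < 4 * (a * b))).mp h4
    linarith
  · have h4 : 4 * (a * b) * (T - S) ≤ 4 * (a * b) * (δ * a * b) := by
      nlinarith [hrp.1, hrm.2, sq_nonneg a, sq_nonneg b]
    have := (mul_le_mul_iff_right₀ (by linarith : (0:ℝ) < 4 * (a * b))).mp h4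
    linarith

/-- Lemma 5, RIP implies near-isometry of inner products: under the
rank-`2r` RIP with constant `δ`, for all `M₁, M₂` of rank at most `r`,
`|⟨𝒜(M₁), 𝒜(M₂)⟩ − ⟨M₁, M₂⟩| ≤ δ‖M₁‖_F‖M₂‖_F`; equivalently,
`|Tr([(𝒜*𝒜 − ℐ)(M₁)]M₂ᵀ)| ≤ δ‖M₁‖_F‖M₂‖_F`. -/
theorem rip_inner_product_bound
    {n₁ n₂ r m : ℕ} (As : Fin m → Matrix (Fin n₁) (Fin n₂) ℝ) (δ : ℝ)
    (hRIP : HasRIP As (2 * r) δ)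
    (M₁ M₂ : Matrix (Fin n₁) (Fin n₂) ℝ)
    (h₁ : M₁.rank ≤ r) (h₂ : M₂.rank ≤ r) :
    |(∑ i, senseOp As M₁ i * senseOp As M₂ i) - matInner M₁ M₂| ≤
      δ * frobNorm M₁ * frobNorm M₂ ∧
    |Matrix.trace ((senseAdj As (senseOp As M₁) - M₁) * M₂ᵀ)| ≤
      δ * frobNorm M₁ * frobNorm M₂ := by
  have key := key_bound As δ hRIP M₁ M₂ h₁ h₂
  refine ⟨key, ?_⟩
  have htr : Matrix.trace ((senseAdj As (senseOp As M₁) - M₁) * M₂ᵀ) =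
      (∑ i, senseOp As M₁ i * senseOp As M₂ i) - matInner M₁ M₂ := by
    rw [Matrix.sub_mul, Matrix.trace_sub]
    congr 1
    · rw [senseAdj, Matrix.sum_mul, Matrix.trace_sum]
      refine Finset.sum_congr rfl fun i _ => ?_
      rw [Matrix.smul_mul, Matrix.trace_smul, smul_eq_mul, Matrix.trace_mul_comm]
      rfl
    · rw [Matrix.trace_mul_comm]; rfl
  rw [htr]
  exact key
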